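/- Let m ≥ 1, r, s > -1, and let τ be a partition of length ≤ m. Define the symmetric Jacobi polynomial P̃_τ^{r,s,m}(x₁,…,x_m) = det(P̃_{τ_i - i + m}^{r,s}(x_j))_{1≤i,j≤m} / V(x₁,…,x_m) where V is the Vandermonde determinant. Then the family (P̃_τ^{r,s,m})_τ is orthogonal with respect to the weight W^{r,s,m}(y) = V(y)² ∏_{i=1}^m y_i^r (1 - y_i)^s on [0,1]^m, and the squared L²-norm of P̃_τ^{r,s,m} equals m! · ∏_{j=1}^m ‖P̃_{τ_j + m - j}^{r,s}‖₂², where ‖·‖₂ is the L²-norm with respect to the one-dimensional weight u^r(1-u)^s on [0,1]. -/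

import Mathlib

open MeasureTheory Set Filter

noncomputable def jw (r s : ℝ) (u : ℝ) : ℝ := u ^ r * (1 - u) ^ s

lemma betaII {x y : ℝ} (hx : -1 < x) (hy : -1 < y) :
    IntervalIntegrable (fun u : ℝ => u ^ x * (1 - u) ^ y) volume 0 1 := by
  have h1 : IntervalIntegrable (fun u : ℝ => u ^ x * (1 - u) ^ y) volume 0 (1/2) := by
    apply (intervalIntegral.intervalIntegrable_rpow' hx).mul_continuousOn
    apply ContinuousOn.rpow_const (by fun_prop)
    intro u hu
    rw [Set.uIcc_of_le (by norm_num)] at hu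
    left; nlinarith [hu.2]
  have h2 : IntervalIntegrable (fun u : ℝ => u ^ x * (1 - u) ^ y) volume (1/2) 1 := by
    have base : IntervalIntegrable (fun u : ℝ => (1 - u) ^ y) volume (1/2) 1 := by
      have := (intervalIntegral.intervalIntegrable_rpow' (r := y) hy
        (a := 0) (b := 1/2)).comp_sub_left 1
      norm_num at this
      exact this.symm
    apply base.continuousOn_mul
    apply ContinuousOn.rpow_const (by fun_prop)
    intro u hu
    rw [Set.uIcc_of_le (by norm_num)] at hu
    left; nlinarith [hu.1]
  exact h1.trans h2

lemma betaIntOn {x y : ℝ} (hx : -1 < x) (hy : -1 < y) :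
    IntegrableOn (fun u : ℝ => u ^ x * (1 - u) ^ y) (Set.Ioo 0 1) volume := by
  have := (intervalIntegrable_iff_integrableOn_Ioo_of_le (by norm_num)).mp (betaII hx hy)
  exact this

noncomputable def muJ (r s : ℝ) (n : ℕ) : ℝ := ∫ u in Set.Ioo (0:ℝ) 1, u ^ n * jw r s u

lemma monomInt {r s : ℝ} (hr : -1 < r) (hs : -1 < s) (n : ℕ) :
    IntegrableOn (fun u : ℝ => u ^ n * jw r s u) (Set.Ioo 0 1) volume := by
  apply (betaIntOn (x := r + n) (by linarith [Nat.cast_nonneg (α := ℝ) n]) hs).congr_fun ?_ measurableSet_Ioo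
  · intro u hu
    simp only [jw]
    rw [Real.rpow_add hu.1, Real.rpow_natCast]
    ring

lemma muJ_rec {r s : ℝ} (hr : -1 < r) (hs : -1 < s) (n : ℕ) :
    (r + s + n + 2) * muJ r s (n + 1) = (r + n + 1) * muJ r s n := by
  set A : ℝ := r + n + 1 with hA
  set B : ℝ := s + 1 with hB
  have hA0 : 0 < A := by simp only [hA]; linarith [Nat.cast_nonneg (α := ℝ) n]
  have hB0 : 0 < B := by simp only [hB]; linarith
  set F : ℝ → ℝ := fun u => u ^ A * (1 - u) ^ B with hF
  set F' : ℝ → ℝ := fun u => A * (u ^ (A - 1) * (1 - u) ^ B) - B * (u ^ A * (1 - u) ^ (B - 1))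
    with hF'
  have hderiv : ∀ u ∈ Set.Ioo (0:ℝ) 1, HasDerivAt F (F' u) u := by
    intro u hu
    have h1 : HasDerivAt (fun v : ℝ => v ^ A) (A * u ^ (A - 1)) u :=
      Real.hasDerivAt_rpow_const (Or.inl hu.1.ne')
    have h2' : HasDerivAt (fun v : ℝ => (1 - v)) (-1) u := by
      simpa using (hasDerivAt_id u).const_sub 1
    have h2 : HasDerivAt (fun v : ℝ => (1 - v) ^ B) (B * (1 - u) ^ (B - 1) * (-1)) u := by
      exact (Real.hasDerivAt_rpow_const (p := B)
        (Or.inl (by intro h; nlinarith [hu.2] : (1 : ℝ) - u ≠ 0))).comp u h2'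
    have := h1.mul h2
    convert this using 1
    · rfl
    · rfl
    · rfl
    · simp only [hF']
      ring
  have hint : IntervalIntegrable F' volume 0 1 := by
    have i1 := (betaII (x := A - 1) (y := B) (by simp only [hA]; linarith [Nat.cast_nonneg (α := ℝ) n]) (by linarith)).const_mul A
    have i2 := (betaII (x := A) (y := B - 1) (by linarith) (by simp only [hB]; linarith)).const_mul B
    simpa [hF'] using i1.sub i2
  have h0 : Filter.Tendsto F (nhdsWithin 0 (Set.Ioi 0)) (nhds 0) := by
    have c1 : ContinuousAt (fun v : ℝ => v ^ A) 0 :=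
      Real.continuousAt_rpow_const 0 A (Or.inr hA0.le)
    have c2 : ContinuousAt (fun v : ℝ => (1 - v) ^ B) 0 := by
      apply ContinuousAt.rpow_const (by fun_prop)
      left; norm_num
    have this2 : Tendsto F (nhds 0) (nhds (F 0)) := (c1.mul c2).tendsto
    have heq : (0:ℝ) ^ A * (1 - (0:ℝ)) ^ B = 0 := by
      rw [Real.zero_rpow hA0.ne']; ring
    exact ((show F 0 = 0 from heq) ▸ this2).mono_left nhdsWithin_le_nhds
  have h1 : Filter.Tendsto F (nhdsWithin 1 (Set.Iio 1)) (nhds 0) := by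
    have c1 : ContinuousAt (fun v : ℝ => v ^ A) 1 := by
      apply ContinuousAt.rpow_const (by fun_prop); left; norm_num
    have c2 : ContinuousAt (fun v : ℝ => (1 - v) ^ B) 1 := by
      apply ContinuousAt.rpow_const (by fun_prop)
      right; exact hB0.le
    have this2 : Tendsto F (nhds 1) (nhds (F 1)) := (c1.mul c2).tendsto
    have heq : (1:ℝ) ^ A * (1 - (1:ℝ)) ^ B = 0 := by
      rw [show (1:ℝ) - 1 = 0 by ring, Real.zero_rpow hB0.ne']; ring
    exact ((show F 1 = 0 from heq) ▸ this2).mono_left nhdsWithin_le_nhds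
  have key : ∫ u in (0:ℝ)..1, F' u = 0 := by
    rw [intervalIntegral.integral_eq_sub_of_hasDerivAt_of_tendsto (by norm_num) hderiv hint h0 h1]
    ring
  rw [intervalIntegral.integral_of_le (by norm_num), integral_Ioc_eq_integral_Ioo] at key
  have e1 : ∀ u ∈ Set.Ioo (0:ℝ) 1,
      u ^ (A - 1) * (1 - u) ^ B = u ^ n * jw r s u - u ^ (n+1) * jw r s u := by
    intro u hu
    have hu0 := hu.1
    have e : u ^ (A - 1) = u ^ n * u ^ r := by
      have : A - 1 = r + n := by simp only [hA]; ring
      rw [this, Real.rpow_add hu0, Real.rpow_natCast]; ring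
    have e2 : (1 - u) ^ B = (1 - u) ^ s * (1 - u) := by
      have : B = s + 1 := hB
      rw [this, Real.rpow_add (by nlinarith [hu.2]), Real.rpow_one]
    rw [e, e2]
    simp only [jw]
    ring
  have e2 : ∀ u ∈ Set.Ioo (0:ℝ) 1,
      u ^ A * (1 - u) ^ (B - 1) = u ^ (n+1) * jw r s u := by
    intro u hu
    have e : u ^ A = u ^ (n+1) * u ^ r := by
      have : A = r + (n+1 : ℕ) := by simp only [hA]; push_cast; ring
      rw [this, Real.rpow_add hu.1, Real.rpow_natCast]; ring
    have e2 : (1 - u) ^ (B - 1) = (1 - u) ^ s := by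
      have : B - 1 = s := by simp only [hB]; ring
      rw [this]
    rw [e, e2]
    simp only [jw]
    ring
  have hi0 := monomInt hr hs n
  have hi1 := monomInt hr hs (n+1)
  have splitInt : ∫ u in Set.Ioo (0:ℝ) 1, F' u
      = A * (muJ r s n - muJ r s (n+1)) - B * muJ r s (n+1) := by
    simp only [hF']
    rw [MeasureTheory.integral_sub, MeasureTheory.integral_const_mul, MeasureTheory.integral_const_mul]
    · congr 1
      · congr 1
        rw [show (muJ r s n - muJ r s (n+1))
            = ∫ u in Set.Ioo (0:ℝ) 1, (u ^ n * jw r s u - u ^ (n+1) * jw r s u) by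
          rw [MeasureTheory.integral_sub hi0 hi1]; rfl]
        exact setIntegral_congr_fun measurableSet_Ioo e1
      · congr 1
        rw [show muJ r s (n+1) = ∫ u in Set.Ioo (0:ℝ) 1, u ^ (n+1) * jw r s u from rfl]
        exact setIntegral_congr_fun measurableSet_Ioo e2
    · exact ((betaIntOn (x := A - 1) (y := B) (by simp only [hA]; linarith [Nat.cast_nonneg (α := ℝ) n]) (by linarith)).const_mul A)
    · exact ((betaIntOn (x := A) (y := B - 1) (by linarith) (by simp only [hB]; linarith)).const_mul B)
  rw [splitInt] at key
  have : (A + B) * muJ r s (n+1) = A * muJ r s n := by linarith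
  calc (r + s + n + 2) * muJ r s (n + 1) = (A + B) * muJ r s (n+1) := by
        simp only [hA, hB]; ring_nf
    _ = A * muJ r s n := this
    _ = (r + n + 1) * muJ r s n := by simp only [hA]

noncomputable def jc (r s : ℝ) (k i : ℕ) : ℝ :=
  (Polynomial.eval (r + 1) (ascPochhammer ℝ k) / (Nat.factorial k)) *
    (Polynomial.eval (-(k : ℝ)) (ascPochhammer ℝ i) *
      Polynomial.eval ((k : ℝ) + r + s + 1) (ascPochhammer ℝ i) /
      (Polynomial.eval (r + 1) (ascPochhammer ℝ i) * (Nat.factorial i)))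

/-- The Jacobi polynomial `P̃_k^{r,s}(y) = ((r+1)_k / k!) ₂F₁(-k, k+r+s+1; r+1; y)`. -/
noncomputable def jacobiP (r s : ℝ) (k : ℕ) (y : ℝ) : ℝ :=
  (Polynomial.eval (r + 1) (ascPochhammer ℝ k) / (Nat.factorial k)) *
    ∑ i ∈ Finset.range (k + 1),
      Polynomial.eval (-(k : ℝ)) (ascPochhammer ℝ i) *
        Polynomial.eval ((k : ℝ) + r + s + 1) (ascPochhammer ℝ i) /
        (Polynomial.eval (r + 1) (ascPochhammer ℝ i) * (Nat.factorial i)) * y ^ i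

lemma jacobiP_eq_sum (r s : ℝ) (k : ℕ) (y : ℝ) :
    jacobiP r s k y = ∑ i ∈ Finset.range (k + 1), jc r s k i * y ^ i := by
  rw [jacobiP, Finset.mul_sum]
  refine Finset.sum_congr rfl fun i _ => ?_
  rw [jc]; ring

lemma asc_eval_neg_nat {k i : ℕ} (h : k < i) :
    Polynomial.eval (-(k : ℝ)) (ascPochhammer ℝ i) = 0 := by
  induction i with
  | zero => omega
  | succ j ih =>
    rw [ascPochhammer_succ_eval]
    rcases Nat.lt_or_ge k j with hj | hj
    · rw [ih hj]; ring
    · have : k = j := by omega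
      subst this
      simp
lemma jc_zero {r s : ℝ} (k i : ℕ) (h : k < i) : jc r s k i = 0 := by
  rw [jc, asc_eval_neg_nat h]; ring

lemma asc_eval_pos {r : ℝ} (hr : -1 < r) (i : ℕ) :
    0 < Polynomial.eval (r + 1) (ascPochhammer ℝ i) := by
  induction i with
  | zero => simp
  | succ j ih =>
    rw [ascPochhammer_succ_eval]
    have : (0:ℝ) < r + 1 + j := by have := Nat.cast_nonneg (α := ℝ) j; linarith
    positivity

/-- The key coefficient recurrence. -/
lemma jc_rec {r s : ℝ} (hr : -1 < r) (k i : ℕ) :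
    ((i:ℝ) + 1) * ((i:ℝ) + r + 1) * jc r s k (i+1)
      = ((i:ℝ) - k) * ((i:ℝ) + k + r + s + 1) * jc r s k i := by
  have h1 : Polynomial.eval (-(k:ℝ)) (ascPochhammer ℝ (i+1))
      = Polynomial.eval (-(k:ℝ)) (ascPochhammer ℝ i) * (-(k:ℝ) + i) := ascPochhammer_succ_eval _ _
  have h2 : Polynomial.eval ((k:ℝ) + r + s + 1) (ascPochhammer ℝ (i+1))
      = Polynomial.eval ((k:ℝ) + r + s + 1) (ascPochhammer ℝ i) * ((k:ℝ) + r + s + 1 + i) :=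
    ascPochhammer_succ_eval _ _
  have h3 : Polynomial.eval (r + 1) (ascPochhammer ℝ (i+1))
      = Polynomial.eval (r + 1) (ascPochhammer ℝ i) * (r + 1 + i) := ascPochhammer_succ_eval _ _
  have h4 : (Nat.factorial (i+1) : ℝ) = (i + 1 : ℝ) * (Nat.factorial i : ℝ) := by
    rw [Nat.factorial_succ]; push_cast; ring
  have hp := asc_eval_pos hr i
  have hf : (Nat.factorial i : ℝ) ≠ 0 := Nat.cast_ne_zero.mpr (Nat.factorial_ne_zero i)
  have hri : (r + 1 + i : ℝ) ≠ 0 := ne_of_gt (by have := Nat.cast_nonneg (α := ℝ) i; linarith)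
  have hi1 : ((i:ℝ) + 1) ≠ 0 := by positivity
  rw [jc, jc, h1, h2, h3, h4]
  field_simp
  ring

noncomputable def Sfun (r s : ℝ) (i j : ℕ) : ℝ :=
  (j:ℝ) * ((j:ℝ) + r) * muJ r s (i + j - 1) - (j:ℝ) * ((j:ℝ) + r + s + 1) * muJ r s (i + j)

lemma Sfun_symm {r s : ℝ} (hr : -1 < r) (hs : -1 < s) (i j : ℕ) :
    Sfun r s i j = Sfun r s j i := by
  rcases Nat.eq_zero_or_pos (i + j) with h | h
  · obtain ⟨hi, hj⟩ := Nat.add_eq_zero.mp h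
    subst hi; subst hj; rfl
  · obtain ⟨n, hn⟩ := Nat.exists_eq_add_of_le h
    have hn' : i + j = n + 1 := by omega
    have key := muJ_rec hr hs n
    have hij1 : i + j - 1 = n := by omega
    have hji1 : j + i - 1 = n := by omega
    have hji : j + i = n + 1 := by omega
    have hreal : (i:ℝ) + (j:ℝ) = (n:ℝ) + 1 := by exact_mod_cast congrArg (Nat.cast (R := ℝ)) hn'
    simp only [Sfun]
    rw [hij1, hji1, hn', hji]
    linear_combination ((i:ℝ) - (j:ℝ)) * key
      + ((j:ℝ) - (i:ℝ)) * (muJ r s n - muJ r s (n+1)) * hreal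

lemma eigen_term {r s : ℝ} (hr : -1 < r) (b j : ℕ) :
    (-(b:ℝ) * ((b:ℝ) + r + s + 1)) * jc r s b j
      = ((j:ℝ)+1) * ((j:ℝ)+r+1) * jc r s b (j+1) - (j:ℝ) * ((j:ℝ)+r+s+1) * jc r s b j := by
  linear_combination (-1 : ℝ) * jc_rec (s := s) hr b j

lemma eigen_sum {r s : ℝ} (hr : -1 < r) (hs : -1 < s) (b i : ℕ) :
    ∑ j ∈ Finset.range (b+1), (-(b:ℝ) * ((b:ℝ) + r + s + 1)) * (jc r s b j * muJ r s (i+j))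
      = ∑ j ∈ Finset.range (b+1), jc r s b j * Sfun r s i j := by
  have expand : ∀ j, (-(b:ℝ) * ((b:ℝ) + r + s + 1)) * (jc r s b j * muJ r s (i+j))
      = ((j:ℝ)+1) * ((j:ℝ)+r+1) * jc r s b (j+1) * muJ r s (i+j)
        - (j:ℝ) * ((j:ℝ)+r+s+1) * jc r s b j * muJ r s (i+j) := by
    intro j
    have := eigen_term (s := s) hr b j
    linear_combination muJ r s (i+j) * this
  rw [Finset.sum_congr rfl (fun j _ => expand j), Finset.sum_sub_distrib]
  set f : ℕ → ℝ := fun j => (j:ℝ) * ((j:ℝ) + r) * jc r s b j * muJ r s (i + j - 1) with hf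
  have shift : ∑ j ∈ Finset.range (b+1), ((j:ℝ)+1) * ((j:ℝ)+r+1) * jc r s b (j+1) * muJ r s (i+j)
      = ∑ j ∈ Finset.range (b+1), f j := by
    have hterm : ∀ j : ℕ, ((j:ℝ)+1) * ((j:ℝ)+r+1) * jc r s b (j+1) * muJ r s (i+j) = f (j+1) := by
      intro j
      simp only [hf]
      rw [show i + (j + 1) - 1 = i + j from by omega]
      push_cast
      ring
    rw [Finset.sum_congr rfl (fun j _ => hterm j)]
    have h1 : ∑ j ∈ Finset.range (b+2), f j
        = (∑ j ∈ Finset.range (b+1), f (j+1)) + f 0 := Finset.sum_range_succ' f (b+1)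
    have h2 : ∑ j ∈ Finset.range (b+2), f j
        = (∑ j ∈ Finset.range (b+1), f j) + f (b+1) := Finset.sum_range_succ f (b+1)
    have hf0 : f 0 = 0 := by simp only [hf]; push_cast; ring
    have hfb : f (b+1) = 0 := by
      simp only [hf]
      rw [jc_zero _ _ (Nat.lt_succ_self b)]
      ring
    rw [hf0] at h1
    rw [hfb] at h2
    linarith
  rw [shift]
  rw [← Finset.sum_sub_distrib]
  refine Finset.sum_congr rfl fun j _ => ?_
  simp only [hf, Sfun]
  ring

lemma stepA {r s : ℝ} (hr : -1 < r) (hs : -1 < s) (a b : ℕ) :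
    (-(b:ℝ) * ((b:ℝ) + r + s + 1)) *
        (∑ i ∈ Finset.range (a+1), ∑ j ∈ Finset.range (b+1),
          jc r s a i * jc r s b j * muJ r s (i+j))
      = ∑ i ∈ Finset.range (a+1), ∑ j ∈ Finset.range (b+1),
          jc r s a i * jc r s b j * Sfun r s i j := by
  rw [Finset.mul_sum]
  refine Finset.sum_congr rfl fun i _ => ?_
  calc (-(b:ℝ) * ((b:ℝ) + r + s + 1)) * ∑ j ∈ Finset.range (b+1),
          jc r s a i * jc r s b j * muJ r s (i+j)
      = jc r s a i * ∑ j ∈ Finset.range (b+1),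
          (-(b:ℝ) * ((b:ℝ) + r + s + 1)) * (jc r s b j * muJ r s (i+j)) := by
        rw [Finset.mul_sum, Finset.mul_sum]
        refine Finset.sum_congr rfl fun j _ => by ring
    _ = jc r s a i * ∑ j ∈ Finset.range (b+1), jc r s b j * Sfun r s i j := by
        rw [eigen_sum hr hs]
    _ = ∑ j ∈ Finset.range (b+1), jc r s a i * jc r s b j * Sfun r s i j := by
        rw [Finset.mul_sum]
        refine Finset.sum_congr rfl fun j _ => by ring

lemma Tsum_zero {r s : ℝ} (hr : -1 < r) (hs : -1 < s) {a b : ℕ} (hab : a ≠ b) :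
    (∑ i ∈ Finset.range (a+1), ∑ j ∈ Finset.range (b+1),
        jc r s a i * jc r s b j * muJ r s (i+j)) = 0 := by
  set T := ∑ i ∈ Finset.range (a+1), ∑ j ∈ Finset.range (b+1),
      jc r s a i * jc r s b j * muJ r s (i+j) with hT
  have hTswap : T = ∑ j ∈ Finset.range (b+1), ∑ i ∈ Finset.range (a+1),
      jc r s b j * jc r s a i * muJ r s (j+i) := by
    rw [hT, Finset.sum_comm]
    refine Finset.sum_congr rfl fun j _ => Finset.sum_congr rfl fun i _ => ?_
    rw [Nat.add_comm j i]; ring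
  have h1 : (-(b:ℝ) * ((b:ℝ) + r + s + 1)) * T
      = ∑ i ∈ Finset.range (a+1), ∑ j ∈ Finset.range (b+1),
          jc r s a i * jc r s b j * Sfun r s i j := stepA hr hs a b
  have h2 : (-(a:ℝ) * ((a:ℝ) + r + s + 1)) * T
      = ∑ i ∈ Finset.range (a+1), ∑ j ∈ Finset.range (b+1),
          jc r s a i * jc r s b j * Sfun r s i j := by
    rw [hTswap, stepA hr hs b a, Finset.sum_comm]
    refine Finset.sum_congr rfl fun i _ => Finset.sum_congr rfl fun j _ => ?_
    rw [Sfun_symm hr hs j i]; ring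
  have h3 : ((-(b:ℝ) * ((b:ℝ) + r + s + 1)) - (-(a:ℝ) * ((a:ℝ) + r + s + 1))) * T = 0 := by
    rw [sub_mul, h1, h2, sub_self]
  have hne : ((-(b:ℝ) * ((b:ℝ) + r + s + 1)) - (-(a:ℝ) * ((a:ℝ) + r + s + 1))) ≠ 0 := by
    have hab' : (a:ℝ) ≠ (b:ℝ) := by exact_mod_cast hab
    have hpos : 0 < (a:ℝ) + (b:ℝ) + r + s + 1 := by
      have h1' : 1 ≤ a + b := by omega
      have : (1:ℝ) ≤ (a:ℝ) + (b:ℝ) := by exact_mod_cast h1'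
      linarith
    intro h
    apply hab'
    have : ((a:ℝ) - (b:ℝ)) * ((a:ℝ) + (b:ℝ) + r + s + 1) = 0 := by linarith [h]; 
    rcases mul_eq_zero.mp this with h' | h'
    · linarith
    · linarith
  exact (mul_eq_zero.mp h3).resolve_left hne

lemma jacobiP_prod_expand (r s : ℝ) (a b : ℕ) (u : ℝ) :
    jacobiP r s a u * jacobiP r s b u * jw r s u
      = ∑ i ∈ Finset.range (a+1), ∑ j ∈ Finset.range (b+1),
          jc r s a i * jc r s b j * (u ^ (i+j) * jw r s u) := by
  rw [jacobiP_eq_sum, jacobiP_eq_sum, Finset.sum_mul_sum, Finset.sum_mul]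
  refine Finset.sum_congr rfl fun i _ => ?_
  rw [Finset.sum_mul]
  refine Finset.sum_congr rfl fun j _ => ?_
  rw [pow_add]
  ring

lemma jacobiP_prod_integrable {r s : ℝ} (hr : -1 < r) (hs : -1 < s) (a b : ℕ) :
    IntegrableOn (fun u => jacobiP r s a u * jacobiP r s b u * jw r s u)
      (Set.Ioo 0 1) volume := by
  have : (fun u => jacobiP r s a u * jacobiP r s b u * jw r s u)
      = fun u => ∑ i ∈ Finset.range (a+1), ∑ j ∈ Finset.range (b+1),
          jc r s a i * jc r s b j * (u ^ (i+j) * jw r s u) := by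
    funext u; exact jacobiP_prod_expand r s a b u
  rw [this]
  apply MeasureTheory.integrable_finset_sum
  intro i _
  apply MeasureTheory.integrable_finset_sum
  intro j _
  exact (monomInt hr hs (i+j)).const_mul _

lemma J2_eq {r s : ℝ} (hr : -1 < r) (hs : -1 < s) (a b : ℕ) :
    (∫ u in Set.Ioo (0:ℝ) 1, jacobiP r s a u * jacobiP r s b u * jw r s u)
      = ∑ i ∈ Finset.range (a+1), ∑ j ∈ Finset.range (b+1),
          jc r s a i * jc r s b j * muJ r s (i+j) := by
  have e : (fun u => jacobiP r s a u * jacobiP r s b u * jw r s u)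
      = fun u => ∑ i ∈ Finset.range (a+1), ∑ j ∈ Finset.range (b+1),
          jc r s a i * jc r s b j * (u ^ (i+j) * jw r s u) := by
    funext u; exact jacobiP_prod_expand r s a b u
  rw [e]
  rw [MeasureTheory.integral_finset_sum _ (fun i _ => by
    apply MeasureTheory.integrable_finset_sum
    intro j _
    exact (monomInt hr hs (i+j)).const_mul _)]
  refine Finset.sum_congr rfl fun i _ => ?_
  rw [MeasureTheory.integral_finset_sum _ (fun j _ => (monomInt hr hs (i+j)).const_mul _)]
  refine Finset.sum_congr rfl fun j _ => ?_
  rw [MeasureTheory.integral_const_mul]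
  rfl

/-- One-dimensional orthogonality of Jacobi polynomials. -/
lemma jacobiP_orth {r s : ℝ} (hr : -1 < r) (hs : -1 < s) {a b : ℕ} (hab : a ≠ b) :
    (∫ u in Set.Ioo (0:ℝ) 1, jacobiP r s a u * jacobiP r s b u * jw r s u) = 0 := by
  rw [J2_eq hr hs]
  exact Tsum_zero hr hs hab

/-- Vandermonde product `V(x) = ∏_{i<j} (x_i - x_j)`. -/
noncomputable def vandermonde (m : ℕ) (x : Fin m → ℝ) : ℝ :=
  ∏ i, ∏ j ∈ Finset.univ.filter (i < ·), (x i - x j)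

/-- The symmetric Jacobi polynomial
`P̃_τ^{r,s,m}(x) = det(P̃_{τ_i - i + m}^{r,s}(x_j))_{i,j} / V(x)`
(indices `i` being `1`-based in the formula, `τ_i - i + m = τ i + (m - 1 - i)`
with `0`-based `i`). -/
noncomputable def symJacobi (r s : ℝ) (m : ℕ) (τ : Fin m → ℕ) (x : Fin m → ℝ) : ℝ :=
  Matrix.det (Matrix.of fun i j : Fin m => jacobiP r s (τ i + (m - 1 - (i : ℕ))) (x j)) /
    vandermonde m x

/-- The unitary Selberg weight `W^{r,s,m}(y) = V(y)² ∏ y_i^r (1-y_i)^s`. -/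
noncomputable def selbergWeight (r s : ℝ) (m : ℕ) (y : Fin m → ℝ) : ℝ :=
  (vandermonde m y) ^ 2 * ∏ i, (y i) ^ r * (1 - y i) ^ s

lemma prodIntOn {m : ℕ} (H : Fin m → ℝ → ℝ)
    (hH : ∀ j, MeasureTheory.IntegrableOn (H j) (Set.Ioo 0 1) volume) :
    MeasureTheory.IntegrableOn (fun y : Fin m → ℝ => ∏ j, H j (y j))
        (Set.univ.pi fun _ => Set.Ioo 0 1) volume
      ∧ (∫ y : Fin m → ℝ in Set.univ.pi fun _ => Set.Ioo (0:ℝ) 1, ∏ j, H j (y j))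
        = ∏ j, ∫ u in Set.Ioo (0:ℝ) 1, H j u := by
  have hPS : MeasurableSet (Set.univ.pi fun _ : Fin m => Set.Ioo (0:ℝ) 1) :=
    MeasurableSet.univ_pi (fun _ => measurableSet_Ioo)
  have key : (Set.univ.pi fun _ : Fin m => Set.Ioo (0:ℝ) 1).indicator
        (fun y => ∏ j, H j (y j))
      = fun y => ∏ j, (Set.Ioo (0:ℝ) 1).indicator (H j) (y j) := by
    funext y
    by_cases hy : y ∈ Set.univ.pi fun _ : Fin m => Set.Ioo (0:ℝ) 1
    · rw [Set.indicator_of_mem hy]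
      refine Finset.prod_congr rfl fun j _ => ?_
      rw [Set.indicator_of_mem (hy j (Set.mem_univ j))]
    · rw [Set.indicator_of_notMem hy]
      rw [Set.mem_univ_pi] at hy
      push_neg at hy
      obtain ⟨j, hj⟩ := hy
      symm
      apply Finset.prod_eq_zero (Finset.mem_univ j)
      rw [Set.indicator_of_notMem hj]
  have int_each : ∀ j, MeasureTheory.Integrable ((Set.Ioo (0:ℝ) 1).indicator (H j)) volume :=
    fun j => (MeasureTheory.integrable_indicator_iff measurableSet_Ioo).2 (hH j)
  have int_prod : MeasureTheory.Integrable
      (fun y : Fin m → ℝ => ∏ j, (Set.Ioo (0:ℝ) 1).indicator (H j) (y j)) volume :=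
    MeasureTheory.Integrable.fintype_prod int_each
  constructor
  · exact (MeasureTheory.integrable_indicator_iff hPS).1 (key ▸ int_prod)
  · rw [← MeasureTheory.integral_indicator hPS, key, MeasureTheory.volume_pi,
      MeasureTheory.integral_fintype_prod_eq_prod (ι := Fin m)
        (f := fun j => (Set.Ioo (0:ℝ) 1).indicator (H j))]
    exact Finset.prod_congr rfl fun j _ => MeasureTheory.integral_indicator measurableSet_Ioo

lemma vandermonde_zero_null (m : ℕ) :
    volume {y : Fin m → ℝ | vandermonde m y = 0} = 0 := by
  have hsub : {y : Fin m → ℝ | vandermonde m y = 0}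
      ⊆ ⋃ (p : Fin m × Fin m) (_ : p.1 ≠ p.2), {y : Fin m → ℝ | y p.1 = y p.2} := by
    intro y hy
    simp only [Set.mem_setOf_eq, vandermonde] at hy
    obtain ⟨i, -, hi⟩ := Finset.prod_eq_zero_iff.mp hy
    obtain ⟨j, hj, hij⟩ := Finset.prod_eq_zero_iff.mp hi
    have hlt : i < j := (Finset.mem_filter.mp hj).2
    refine Set.mem_iUnion.mpr ⟨(i, j), Set.mem_iUnion.mpr ⟨Fin.ne_of_lt hlt, ?_⟩⟩
    simpa [Set.mem_setOf_eq, sub_eq_zero] using hij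
  refine measure_mono_null hsub (measure_iUnion_null fun p => ?_)
  rcases eq_or_ne p.1 p.2 with h | h
  · simp [h]
  · have hsub2 : (⋃ (_ : p.1 ≠ p.2), {y : Fin m → ℝ | y p.1 = y p.2})
        ⊆ {y : Fin m → ℝ | y p.1 = y p.2} := Set.iUnion_subset fun _ => subset_rfl
    refine measure_mono_null hsub2 ?_
    set L : (Fin m → ℝ) →ₗ[ℝ] ℝ :=
      (LinearMap.proj (R := ℝ) (φ := fun _ : Fin m => ℝ) p.1)
        - (LinearMap.proj (R := ℝ) (φ := fun _ : Fin m => ℝ) p.2) with hL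
    have hset : {y : Fin m → ℝ | y p.1 = y p.2} = (LinearMap.ker L : Set (Fin m → ℝ)) := by
      ext y
      simp [hL, LinearMap.mem_ker, sub_eq_zero]
    rw [hset]
    apply MeasureTheory.Measure.addHaar_submodule
    intro htop
    have h1 : Pi.single p.1 (1:ℝ) ∈ LinearMap.ker L := by rw [htop]; trivial
    rw [LinearMap.mem_ker] at h1
    simp only [hL, LinearMap.sub_apply, LinearMap.proj_apply, Pi.single_eq_same,
      Pi.single_eq_of_ne (Ne.symm h)] at h1
    norm_num at h1

noncomputable def Mmat (r s : ℝ) {m : ℕ} (A B : Fin m → ℕ) : Matrix (Fin m) (Fin m) ℝ :=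
  Matrix.of fun i j =>
    ∫ u in Set.Ioo (0:ℝ) 1, jacobiP r s (A i) u * jacobiP r s (B j) u * jw r s u

noncomputable def csign {m : ℕ} (π : Equiv.Perm (Fin m)) : ℝ := ((Equiv.Perm.sign π : ℤ) : ℝ)

lemma csign_mul {m : ℕ} (π ρ : Equiv.Perm (Fin m)) : csign (π * ρ) = csign π * csign ρ := by
  simp [csign, Equiv.Perm.sign_mul]

lemma csign_sq {m : ℕ} (ρ : Equiv.Perm (Fin m)) : csign ρ * csign ρ = 1 := by
  rcases Int.units_eq_one_or (Equiv.Perm.sign ρ) with h | h <;> simp [csign, h]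

lemma perm_sum_det {m : ℕ} (N : Matrix (Fin m) (Fin m) ℝ) :
    (∑ π : Equiv.Perm (Fin m), ∑ ρ : Equiv.Perm (Fin m),
        csign π * csign ρ * ∏ j, N (π j) (ρ j))
      = (Nat.factorial m) * N.det := by
  rw [Finset.sum_comm]
  have inner : ∀ ρ : Equiv.Perm (Fin m),
      (∑ π : Equiv.Perm (Fin m), csign π * csign ρ * ∏ j, N (π j) (ρ j)) = N.det := by
    intro ρ
    rw [← Equiv.sum_comp (Equiv.mulRight ρ)
      (fun π => csign π * csign ρ * ∏ j, N (π j) (ρ j))]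
    have eterm : ∀ χ : Equiv.Perm (Fin m),
        csign (χ * ρ) * csign ρ * ∏ j, N ((χ * ρ) j) (ρ j)
          = csign χ * ∏ j, N (χ j) j := by
      intro χ
      have h1 : csign (χ * ρ) * csign ρ = csign χ := by
        rw [csign_mul, mul_assoc, csign_sq, mul_one]
      have h2 : (∏ j, N ((χ * ρ) j) (ρ j)) = ∏ j, N (χ j) j := by
        simp only [Equiv.Perm.mul_apply]
        exact Equiv.prod_comp ρ (fun j => N (χ j) j)
      rw [h1, h2]
    calc (∑ χ : Equiv.Perm (Fin m),
            csign ((Equiv.mulRight ρ) χ) * csign ρ * ∏ j, N (((Equiv.mulRight ρ) χ) j) (ρ j))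
        = ∑ χ : Equiv.Perm (Fin m), csign χ * ∏ j, N (χ j) j := by
          refine Finset.sum_congr rfl fun χ _ => ?_
          simpa using eterm χ
      _ = N.det := (Matrix.det_apply' N).symm
  rw [Finset.sum_congr rfl (fun ρ _ => inner ρ), Finset.sum_const, Finset.card_univ,
    Fintype.card_perm, Fintype.card_fin, nsmul_eq_mul]

lemma main_det {r s : ℝ} (hr : -1 < r) (hs : -1 < s) {m : ℕ} (A B : Fin m → ℕ) :
    (∫ y : Fin m → ℝ in Set.univ.pi fun _ => Set.Ioo (0:ℝ) 1,
        (Matrix.det (Matrix.of fun i j : Fin m => jacobiP r s (A i) (y j)))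
          * (Matrix.det (Matrix.of fun i j : Fin m => jacobiP r s (B i) (y j)))
          * ∏ i, jw r s (y i))
      = (Nat.factorial m) * (Mmat r s A B).det := by
  have hint : ∀ (π ρ : Equiv.Perm (Fin m)), MeasureTheory.IntegrableOn
      (fun y : Fin m → ℝ => csign π * csign ρ *
        ∏ j, (jacobiP r s (A (π j)) (y j) * jacobiP r s (B (ρ j)) (y j) * jw r s (y j)))
      (Set.univ.pi fun _ => Set.Ioo 0 1) volume := by
    intro π ρ
    exact ((prodIntOn _ (fun j => jacobiP_prod_integrable hr hs (A (π j)) (B (ρ j)))).1).const_mul _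
  have expand : ∀ y : Fin m → ℝ,
      (Matrix.det (Matrix.of fun i j : Fin m => jacobiP r s (A i) (y j)))
          * (Matrix.det (Matrix.of fun i j : Fin m => jacobiP r s (B i) (y j)))
          * ∏ i, jw r s (y i)
        = ∑ π : Equiv.Perm (Fin m), ∑ ρ : Equiv.Perm (Fin m), csign π * csign ρ *
            ∏ j, (jacobiP r s (A (π j)) (y j) * jacobiP r s (B (ρ j)) (y j) * jw r s (y j)) := by
    intro y
    rw [Matrix.det_apply', Matrix.det_apply', Finset.sum_mul_sum, Finset.sum_mul]
    refine Finset.sum_congr rfl fun π _ => ?_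
    rw [Finset.sum_mul]
    refine Finset.sum_congr rfl fun ρ _ => ?_
    simp only [Matrix.of_apply]
    rw [show (∏ j, (jacobiP r s (A (π j)) (y j) * jacobiP r s (B (ρ j)) (y j) * jw r s (y j)))
        = (∏ j, jacobiP r s (A (π j)) (y j)) * (∏ j, jacobiP r s (B (ρ j)) (y j))
          * ∏ j, jw r s (y j) by
      rw [← Finset.prod_mul_distrib, ← Finset.prod_mul_distrib]]
    simp only [csign]
    ring
  rw [MeasureTheory.setIntegral_congr_fun
    (MeasurableSet.univ_pi (fun _ => measurableSet_Ioo)) (fun y _ => expand y)]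
  rw [MeasureTheory.integral_finset_sum _ (fun π _ =>
    MeasureTheory.integrable_finset_sum _ (fun ρ _ => hint π ρ))]
  rw [Finset.sum_congr rfl (fun π _ =>
    MeasureTheory.integral_finset_sum _ (fun ρ _ => hint π ρ))]
  have hterm : ∀ (π ρ : Equiv.Perm (Fin m)),
      (∫ y : Fin m → ℝ in Set.univ.pi fun _ => Set.Ioo (0:ℝ) 1, csign π * csign ρ *
          ∏ j, (jacobiP r s (A (π j)) (y j) * jacobiP r s (B (ρ j)) (y j) * jw r s (y j)))
        = csign π * csign ρ * ∏ j, (Mmat r s A B) (π j) (ρ j) := by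
    intro π ρ
    rw [MeasureTheory.integral_const_mul]
    congr 1
    rw [(prodIntOn (fun j => fun u =>
      jacobiP r s (A (π j)) u * jacobiP r s (B (ρ j)) u * jw r s u)
      (fun j => jacobiP_prod_integrable hr hs (A (π j)) (B (ρ j)))).2]
    rfl
  rw [Finset.sum_congr rfl (fun π _ => Finset.sum_congr rfl (fun ρ _ => hterm π ρ))]
  exact perm_sum_det (Mmat r s A B)

lemma reduce_integral {r s : ℝ} {m : ℕ} (τ σ : Fin m → ℕ) :
    (∫ y : Fin m → ℝ in Set.univ.pi fun _ => Set.Ioo (0:ℝ) 1,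
        symJacobi r s m τ y * symJacobi r s m σ y * selbergWeight r s m y)
      = ∫ y : Fin m → ℝ in Set.univ.pi fun _ => Set.Ioo (0:ℝ) 1,
          (Matrix.det (Matrix.of fun i j : Fin m =>
              jacobiP r s (τ i + (m - 1 - (i : ℕ))) (y j)))
            * (Matrix.det (Matrix.of fun i j : Fin m =>
              jacobiP r s (σ i + (m - 1 - (i : ℕ))) (y j)))
            * ∏ i, jw r s (y i) := by
  apply MeasureTheory.setIntegral_congr_ae
    (MeasurableSet.univ_pi (fun _ => measurableSet_Ioo))
  have hae : ∀ᵐ y : Fin m → ℝ, vandermonde m y ≠ 0 := by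
    rw [MeasureTheory.ae_iff]
    simpa [not_not] using vandermonde_zero_null m
  filter_upwards [hae] with y hV _
  simp only [symJacobi, selbergWeight]
  have hP : (∏ i, (y i) ^ r * (1 - y i) ^ s) = ∏ i, jw r s (y i) := rfl
  rw [hP]
  field_simp

lemma main_det' {r s : ℝ} (hr : -1 < r) (hs : -1 < s) {m : ℕ} (τ σ : Fin m → ℕ) :
    (∫ y : Fin m → ℝ in Set.univ.pi fun _ => Set.Ioo (0:ℝ) 1,
          (Matrix.det (Matrix.of fun i j : Fin m =>
              jacobiP r s (τ i + (m - 1 - (i : ℕ))) (y j)))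
            * (Matrix.det (Matrix.of fun i j : Fin m =>
              jacobiP r s (σ i + (m - 1 - (i : ℕ))) (y j)))
            * ∏ i, jw r s (y i))
      = (Nat.factorial m) * (Mmat r s (fun i : Fin m => τ i + (m - 1 - (i : ℕ)))
          (fun i : Fin m => σ i + (m - 1 - (i : ℕ)))).det :=
  main_det hr hs _ _

/-- Orthogonality of symmetric Jacobi polynomials with respect to the unitary Selberg
weight on `[0,1]^m`, and the value of the squared `L²`-norm:
`‖P̃_τ^{r,s,m}‖² = m! ∏_{j=1}^m ‖P̃_{τ_j+m-j}^{r,s}‖₂²`. -/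
theorem symJacobi_orthogonality (m : ℕ) (hm : 1 ≤ m) (r s : ℝ) (hr : -1 < r) (hs : -1 < s)
    (τ σ : Fin m → ℕ) (hτ : Antitone τ) (hσ : Antitone σ) :
    (τ ≠ σ →
      (∫ y : Fin m → ℝ in Set.univ.pi fun _ => Set.Ioo (0 : ℝ) 1,
        symJacobi r s m τ y * symJacobi r s m σ y * selbergWeight r s m y) = 0) ∧
    (∫ y : Fin m → ℝ in Set.univ.pi fun _ => Set.Ioo (0 : ℝ) 1,
        (symJacobi r s m τ y) ^ 2 * selbergWeight r s m y) =
      (Nat.factorial m) *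
        ∏ j : Fin m, ∫ u in Set.Ioo (0 : ℝ) 1,
          (jacobiP r s (τ j + (m - 1 - (j : ℕ))) u) ^ 2 * u ^ r * (1 - u) ^ s := by
  have hanti : ∀ (ν : Fin m → ℕ), Antitone ν →
      StrictAnti (fun i : Fin m => ν i + (m - 1 - (i : ℕ))) := by
    intro ν hν i j hij
    have h1 : ν j ≤ ν i := hν (le_of_lt hij)
    have h2 : (i : ℕ) < (j : ℕ) := hij
    have h3 : (j : ℕ) < m := j.isLt
    simp only
    omega
  have hAanti := hanti τ hτ
  have hBanti := hanti σ hσ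
  constructor
  · -- orthogonality
    intro hτσ
    rw [reduce_integral τ σ, main_det' hr hs τ σ]
    have hAB : (fun i : Fin m => τ i + (m - 1 - (i : ℕ)))
        ≠ (fun i : Fin m => σ i + (m - 1 - (i : ℕ))) := by
      intro h
      apply hτσ
      funext i
      have := congrFun h i
      omega
    have hrange : Set.range (fun i : Fin m => τ i + (m - 1 - (i : ℕ)))
        ≠ Set.range (fun i : Fin m => σ i + (m - 1 - (i : ℕ))) := by
      intro h
      apply hAB
      have hsurj : Function.Surjective (Fin.rev : Fin m → Fin m) :=
        fun x => ⟨x.rev, Fin.rev_rev x⟩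
      have hmonoA : StrictMono (fun i : Fin m => τ (Fin.rev i) + (m - 1 - ((Fin.rev i) : ℕ))) :=
        fun i j hij => hAanti (Fin.rev_lt_rev.mpr hij)
      have hmonoB : StrictMono (fun i : Fin m => σ (Fin.rev i) + (m - 1 - ((Fin.rev i) : ℕ))) :=
        fun i j hij => hBanti (Fin.rev_lt_rev.mpr hij)
      have hrA : Set.range (fun i : Fin m => τ (Fin.rev i) + (m - 1 - ((Fin.rev i) : ℕ)))
          = Set.range (fun i : Fin m => τ i + (m - 1 - (i : ℕ))) :=
        hsurj.range_comp (g := fun i : Fin m => τ i + (m - 1 - (i : ℕ)))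
      have hrB : Set.range (fun i : Fin m => σ (Fin.rev i) + (m - 1 - ((Fin.rev i) : ℕ)))
          = Set.range (fun i : Fin m => σ i + (m - 1 - (i : ℕ))) :=
        hsurj.range_comp (g := fun i : Fin m => σ i + (m - 1 - (i : ℕ)))
      haveI : WellFoundedLT (Fin m) := inferInstance
      have heq := Set.range_injOn_strictMono (β := Fin m) (γ := ℕ)
        hmonoA hmonoB (by rw [hrA, hrB, h])
      funext i
      have h2 := congrFun heq (Fin.rev i)
      simpa [Fin.rev_rev] using h2
    have hdet : (Mmat r s (fun i : Fin m => τ i + (m - 1 - (i : ℕ)))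
        (fun i : Fin m => σ i + (m - 1 - (i : ℕ)))).det = 0 := by
      have hnot : ¬ (Set.range (fun i : Fin m => τ i + (m - 1 - (i : ℕ)))
            ⊆ Set.range (fun i : Fin m => σ i + (m - 1 - (i : ℕ)))
          ∧ Set.range (fun i : Fin m => σ i + (m - 1 - (i : ℕ)))
            ⊆ Set.range (fun i : Fin m => τ i + (m - 1 - (i : ℕ)))) :=
        fun hc => hrange (Set.Subset.antisymm hc.1 hc.2)
      rcases not_and_or.mp hnot with h | h
      · obtain ⟨x, hxA, hxB⟩ := Set.not_subset.mp h
        obtain ⟨i0, rfl⟩ := hxA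
        apply Matrix.det_eq_zero_of_row_eq_zero i0
        intro j
        exact jacobiP_orth hr hs (fun he => hxB ⟨j, he.symm⟩)
      · obtain ⟨x, hxB, hxA⟩ := Set.not_subset.mp h
        obtain ⟨j0, rfl⟩ := hxB
        apply Matrix.det_eq_zero_of_column_eq_zero j0
        intro i
        exact jacobiP_orth hr hs (fun he => hxA ⟨i, he⟩)
    rw [hdet, mul_zero]
  · have hsq : (∫ y : Fin m → ℝ in Set.univ.pi fun _ => Set.Ioo (0:ℝ) 1,
          (symJacobi r s m τ y) ^ 2 * selbergWeight r s m y)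
        = ∫ y : Fin m → ℝ in Set.univ.pi fun _ => Set.Ioo (0:ℝ) 1,
            symJacobi r s m τ y * symJacobi r s m τ y * selbergWeight r s m y :=
      MeasureTheory.setIntegral_congr_fun
        (MeasurableSet.univ_pi (fun _ => measurableSet_Ioo)) (fun y _ => by ring)
    rw [hsq, reduce_integral τ τ, main_det' hr hs τ τ]
    have hAinj : Function.Injective (fun i : Fin m => τ i + (m - 1 - (i : ℕ))) :=
      hAanti.injective
    have hdiag : Mmat r s (fun i : Fin m => τ i + (m - 1 - (i : ℕ)))
          (fun i : Fin m => τ i + (m - 1 - (i : ℕ)))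
        = Matrix.diagonal (fun j => Mmat r s (fun i : Fin m => τ i + (m - 1 - (i : ℕ)))
            (fun i : Fin m => τ i + (m - 1 - (i : ℕ))) j j) := by
      ext i j
      by_cases hij : i = j
      · subst hij; simp
      · rw [Matrix.diagonal_apply_ne _ hij]
        exact jacobiP_orth hr hs (fun he => hij (hAinj he))
    rw [hdiag, Matrix.det_diagonal]
    congr 1
    refine Finset.prod_congr rfl fun j _ => ?_
    show (∫ u in Set.Ioo (0:ℝ) 1,
        jacobiP r s (τ j + (m - 1 - (j : ℕ))) u * jacobiP r s (τ j + (m - 1 - (j : ℕ))) u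
          * jw r s u) = _
    apply MeasureTheory.setIntegral_congr_fun measurableSet_Ioo
    intro u _
    simp only [jw]
    ring
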